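/- Fix the MIBLP data as in the context. For any nonnegative upper-level pair (x^u, y^u) (x^u ∈ ℝ^{mR} with x^u ≥ 0, y^u a nonnegative integer vector in ℤ^{mZ}) and any nonnegative lower-level pair (x^{l0}, y^{l0}) (x^{l0} ∈ ℝ^{nR} with x^{l0} ≥ 0, y^{l0} a nonnegative integer vector in ℤ^{nZ}), the following are equivalent: (i) w_R·x^{l0} + w_Z·y^{l0} ≥ w_R·x + w_Z·y for every (x, y) ∈ Ω_{(x^u,y^u)}; (ii) for every nonnegative integer vector y ∈ ℤ^{nZ} such that there exists x ≥ 0 in ℝ^{nR} with P_R x ≤ s − Q_R x^u − Q_Z y^u − P_Z y (i.e. (x^u,y^u) ∈ Proj_{(x^u,y^u)} P(y)), there exist x ∈ ℝ^{nR} and π ∈ ℝ^{nL} with x ≥ 0, π ≥ 0 satisfying the KKT conditions for the inner LP at (x^u, y^u, y) and such that w_R·x^{l0} + w_Z·y^{l0} ≥ w_R·x + w_Z·y. -/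

import Mathlib

open Matrix


open Matrix Finset

section Cone

variable {n : Type*} [Fintype n]

/-- Cone generated by `v i`, `i ∈ S`. -/
def coneOn {ι : Type*} (v : ι → EuclideanSpace ℝ n) (S : Finset ι) : Set (EuclideanSpace ℝ n) :=
  {x | ∃ c : ι → ℝ, (∀ i, 0 ≤ c i) ∧ ∑ i ∈ S, c i • v i = x}

theorem isClosed_coneOn {ι : Type*} (v : ι → EuclideanSpace ℝ n) (S : Finset ι) :
    IsClosed (coneOn v S) := by
  classical
  induction S using Finset.strongInduction with
  | _ S ih =>
  by_cases hLI : LinearIndependent ℝ (fun i : S => v i)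
  · -- linearly independent case: closed embedding image of the nonnegative orthant
    set f : (↥S → ℝ) →ₗ[ℝ] EuclideanSpace ℝ n :=
      { toFun := fun c => ∑ i : S, c i • v i
        map_add' := by intro a b; simp [add_smul, Finset.sum_add_distrib]
        map_smul' := by intro r a; simp [smul_smul, Finset.smul_sum] } with hf
    have hker : LinearMap.ker f = ⊥ := by
      rw [LinearMap.ker_eq_bot']
      intro c hc
      have := Fintype.linearIndependent_iff.1 hLI c hc
      funext i; exact this i
    have hemb : Topology.IsClosedEmbedding f := f.isClosedEmbedding_of_injective hker
    have heq : coneOn v S = f '' {c : ↥S → ℝ | ∀ i, 0 ≤ c i} := by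
      ext x
      constructor
      · rintro ⟨c, hc, rfl⟩
        refine ⟨fun i => c i, fun i => hc i, ?_⟩
        show ∑ i : S, c i • v i = _
        rw [Finset.sum_coe_sort S (fun i => c i • v i)]
      · rintro ⟨c, hc, rfl⟩
        refine ⟨fun i => if h : i ∈ S then c ⟨i, h⟩ else 0, ?_, ?_⟩
        · intro i
          by_cases h : i ∈ S
          · simpa [h] using hc ⟨i, h⟩
          · simp [h]
        · show _ = ∑ i : S, c i • v i
          rw [← Finset.sum_coe_sort S (fun i => (if h : i ∈ S then c ⟨i, h⟩ else 0) • v i)]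
          exact Finset.sum_congr rfl fun i _ => by simp
    rw [heq]
    refine hemb.isClosedMap _ ?_
    have : {c : ↥S → ℝ | ∀ i, 0 ≤ c i} = ⋂ i, {c : ↥S → ℝ | 0 ≤ c i} := by
      ext c; simp [Set.mem_iInter]
    rw [this]
    exact isClosed_iInter fun i => isClosed_le continuous_const (continuous_apply i)
  · -- dependent case: reduce to smaller generating sets
    obtain ⟨g, hgsum, i₀, hgi₀⟩ := Fintype.not_linearIndependent_iff.1 hLI
    -- WLOG some positive coefficient
    have hpos : ∃ g : ↥S → ℝ, ∑ i : S, g i • v i = 0 ∧ ∃ i, 0 < g i := by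
      rcases lt_trichotomy (g i₀) 0 with h | h | h
      · exact ⟨-g, by rw [Finset.univ_eq_attach] at hgsum; simp [neg_smul, Finset.sum_neg_distrib, hgsum], i₀, by simpa using h⟩
      · exact absurd h hgi₀
      · exact ⟨g, hgsum, i₀, h⟩
    obtain ⟨g, hgsum, j₀, hj₀⟩ := hpos
    set G : ι → ℝ := fun i => if h : i ∈ S then g ⟨i, h⟩ else 0 with hG
    have hGsum : ∑ i ∈ S, G i • v i = 0 := by
      rw [← Finset.sum_coe_sort S (fun i => G i • v i)]
      rw [← hgsum]; congr 1; funext i; simp [hG, i.2]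
    set T : Finset ι := S.filter (fun i => 0 < G i) with hT
    have hTj₀ : (j₀ : ι) ∈ T := by
      simp only [hT, Finset.mem_filter]
      exact ⟨j₀.2, by simpa [hG, j₀.2] using hj₀⟩
    have hTne : T.Nonempty := ⟨j₀, hTj₀⟩
    have hTS : T ⊆ S := Finset.filter_subset _ _
    have key : coneOn v S = ⋃ i ∈ T, coneOn v (S.erase i) := by
      ext x
      simp only [Set.mem_iUnion]
      constructor
      · rintro ⟨c, hc, rfl⟩
        set t : ℝ := T.inf' hTne (fun i => c i / G i) with ht
        obtain ⟨i₁, hi₁T, hti₁⟩ := T.exists_mem_eq_inf' hTne (fun i => c i / G i)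
        have htnn : 0 ≤ t := by
          rw [ht]
          apply Finset.le_inf'
          intro i hi
          have : 0 < G i := (Finset.mem_filter.1 hi).2
          exact div_nonneg (hc i) this.le
        set c' : ι → ℝ := fun i => c i - t * G i with hc'
        have hc'nn : ∀ i, 0 ≤ c' i := by
          intro i
          by_cases hGi : 0 < G i
          · have hiS : i ∈ S := by
              by_contra h; simp [hG, h] at hGi
            have hiT : i ∈ T := Finset.mem_filter.2 ⟨hiS, hGi⟩
            have : t ≤ c i / G i := by rw [ht]; exact Finset.inf'_le _ hiT
            have := (le_div_iff₀ hGi).1 this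
            simp [hc']; linarith
          · push_neg at hGi
            have : t * G i ≤ 0 := mul_nonpos_of_nonneg_of_nonpos htnn hGi
            simp [hc']; nlinarith [hc i]
        have hc'i₁ : c' i₁ = 0 := by
          have hGi₁ : 0 < G i₁ := (Finset.mem_filter.1 hi₁T).2
          simp [hc', ht.trans hti₁, div_mul_cancel₀ _ hGi₁.ne']
        refine ⟨i₁, hi₁T, c', hc'nn, ?_⟩
        have hsum' : ∑ i ∈ S, c' i • v i = ∑ i ∈ S, c i • v i := by
          simp only [hc', sub_smul, mul_smul]
          rw [Finset.sum_sub_distrib, ← Finset.smul_sum, hGsum, smul_zero, sub_zero]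
        rw [Finset.sum_erase _ (by rw [hc'i₁, zero_smul]), hsum']
      · rintro ⟨i, hiT, c, hc, rfl⟩
        refine ⟨fun j => if j ∈ S.erase i then c j else 0, ?_, ?_⟩
        · intro j; by_cases h : j ∈ S.erase i <;> simp [h, hc _]
        · rw [← Finset.sum_subset (Finset.erase_subset i S)]
          · apply Finset.sum_congr rfl; intro j hj; simp [hj]
          · intro j _ hj; simp [hj]
    rw [key]
    exact Set.Finite.isClosed_biUnion T.finite_toSet
      (fun i hi => ih _ (Finset.erase_ssubset (hTS hi)))

end Cone

section Farkas

theorem farkas_cone {n : Type*} [Fintype n] {ι : Type*} [Fintype ι]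
    (v : ι → EuclideanSpace ℝ n) (b : EuclideanSpace ℝ n)
    (h : ∀ y : EuclideanSpace ℝ n, (∀ i, (0:ℝ) ≤ inner ℝ (v i) y) → (0:ℝ) ≤ inner ℝ y b) :
    ∃ c : ι → ℝ, (∀ i, 0 ≤ c i) ∧ ∑ i, c i • v i = b := by
  classical
  set K : ConvexCone ℝ (EuclideanSpace ℝ n) :=
    { carrier := coneOn v Finset.univ
      smul_mem' := by
        rintro r hr x ⟨c, hc, rfl⟩
        exact ⟨fun i => r * c i, fun i => mul_nonneg hr.le (hc i), by
          simp [Finset.smul_sum, mul_smul]⟩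
      add_mem' := by
        rintro x ⟨c, hc, rfl⟩ y ⟨d, hd, rfl⟩
        exact ⟨fun i => c i + d i, fun i => add_nonneg (hc i) (hd i), by
          simp [add_smul, Finset.sum_add_distrib]⟩ } with hK
  by_contra hb
  have hbK : b ∉ K := fun hbK => hb hbK
  have hne : (K : Set (EuclideanSpace ℝ n)).Nonempty :=
    ⟨0, ⟨fun _ => 0, fun i => le_refl 0, by simp⟩⟩
  have hcl : IsClosed (K : Set (EuclideanSpace ℝ n)) := isClosed_coneOn v Finset.univ
  obtain ⟨y, hy1, hy2⟩ := ProperCone.hyperplane_separation'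
    (⟨K.toPointedCone (.of_nonempty_of_isClosed hne hcl), hcl⟩ : ProperCone ℝ (EuclideanSpace ℝ n)) hbK
  rw [real_inner_comm] at hy2
  have hvy : ∀ i, (0:ℝ) ≤ inner ℝ (v i) y := by
    intro i
    refine hy1 (v i) (show v i ∈ K from ?_)
    refine ⟨fun j => if j = i then 1 else 0, fun j => by positivity, ?_⟩
    simp [ite_smul]
  have := h y hvy
  linarith

end Farkas

section LP

open Matrix

variable {m n : ℕ}

/-- auxiliary embedding of a pair (vector, scalar) into Euclidean space. -/
noncomputable def mkE {α : Type*} [Fintype α] (p : α → ℝ) (t : ℝ) : EuclideanSpace ℝ (α ⊕ Unit) :=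
  (WithLp.equiv 2 _).symm (Sum.elim p fun _ => t)

lemma inner_mkE {α : Type*} [Fintype α] (p q : α → ℝ) (t u : ℝ) :
    (inner ℝ (mkE p t) (mkE q u) : ℝ) = p ⬝ᵥ q + t * u := by
  simp [mkE, PiLp.inner_apply, RCLike.inner_apply, Fintype.sum_sum_type, dotProduct, mul_comm]

lemma mkE_eq_iff {α : Type*} [Fintype α] (p q : α → ℝ) (t u : ℝ) :
    mkE p t = mkE q u ↔ p = q ∧ t = u := by
  constructor
  · intro h
    constructor
    · funext k; exact congrFun (congrArg (fun z => (WithLp.equiv 2 _) z) h) (Sum.inl k)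
    · exact congrFun (congrArg (fun z => (WithLp.equiv 2 _) z) h) (Sum.inr ())
  · rintro ⟨rfl, rfl⟩; rfl

theorem lp_strong_duality (A : Matrix (Fin m) (Fin n) ℝ) (b : Fin m → ℝ) (w : Fin n → ℝ)
    (x0 : Fin n → ℝ) (hx0 : 0 ≤ x0) (hfeas : A *ᵥ x0 ≤ b)
    (M : ℝ) (hbdd : ∀ x : Fin n → ℝ, 0 ≤ x → A *ᵥ x ≤ b → w ⬝ᵥ x ≤ M) :
    ∃ (x : Fin n → ℝ) (π : Fin m → ℝ), 0 ≤ x ∧ 0 ≤ π ∧ A *ᵥ x ≤ b ∧ w ≤ Aᵀ *ᵥ π ∧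
      b ⬝ᵥ π ≤ w ⬝ᵥ x := by
  classical
  -- primal attainment via closedness of the achievable-value set
  set u : (Fin n ⊕ Fin m) → EuclideanSpace ℝ (Fin m ⊕ Unit) :=
    Sum.elim (fun j => mkE (fun k => A k j) (-(w j)))
      (fun k => mkE (fun k' => if k' = k then 1 else 0) 0) with hu
  have mem1 : ∀ t : ℝ, mkE b (-t) ∈ coneOn u Finset.univ ↔
      ∃ x : Fin n → ℝ, 0 ≤ x ∧ A *ᵥ x ≤ b ∧ w ⬝ᵥ x = t := by
    intro t
    constructor
    · rintro ⟨c, hc, hsum⟩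
      set x : Fin n → ℝ := fun j => c (Sum.inl j) with hx
      set z : Fin m → ℝ := fun k => c (Sum.inr k) with hz
      have happ : ∀ q, (∑ i, c i • u i) q = mkE b (-t) q := fun q => congrArg (fun z => z q) hsum
      have hinl : ∀ k, (A *ᵥ x) k + z k = b k := by
        intro k
        have := happ (Sum.inl k)
        rw [WithLp.ofLp_sum, Finset.sum_apply] at this
        simpa [hu, mkE, Fintype.sum_sum_type, mulVec, dotProduct, mul_comm,
          Finset.sum_ite_eq, Finset.mul_sum] using this
      have hinr : w ⬝ᵥ x = t := by
        have := happ (Sum.inr ())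
        rw [WithLp.ofLp_sum, Finset.sum_apply] at this
        have h2 : (∑ j, x j * (-(w j))) = -t := by
          simpa [hu, mkE, Fintype.sum_sum_type] using this
        have : ∑ j, w j * x j = t := by
          have := congrArg Neg.neg h2
          simp only [neg_neg, ← Finset.sum_neg_distrib] at this
          rw [← this]; exact Finset.sum_congr rfl fun j _ => by ring
        simpa [dotProduct] using this
      refine ⟨x, fun j => hc _, ?_, hinr⟩
      intro k
      have := hinl k
      have hzk : 0 ≤ z k := hc _
      linarith
    · rintro ⟨x, hxnn, hxf, rfl⟩
      refine ⟨Sum.elim x (fun k => b k - (A *ᵥ x) k), ?_, ?_⟩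
      · rintro (j | k)
        · exact hxnn j
        · simpa using sub_nonneg.2 (hxf k)
      · ext q
        rw [WithLp.ofLp_sum, Finset.sum_apply]
        rcases q with k | q
        · simp [hu, mkE, Fintype.sum_sum_type, mulVec, dotProduct, mul_comm,
            Finset.sum_ite_eq]
        · simp [hu, mkE, Fintype.sum_sum_type, dotProduct, mul_comm,
            Finset.sum_neg_distrib]
  -- the set of achieved primal values
  set T : Set ℝ := {t : ℝ | mkE b (-t) ∈ coneOn u Finset.univ} with hTdef
  have hTclosed : IsClosed T := by
    have hcont : Continuous fun t : ℝ => mkE b (-t) := by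
      have heq : (fun t : ℝ => mkE b (-t)) =
          fun t : ℝ => mkE b 0 + t • mkE (0 : Fin m → ℝ) (-1) := by
        funext t; ext q
        rcases q with k | q
        · simp [mkE]
        · simp [mkE]
      rw [heq]
      exact continuous_const.add (continuous_id.smul continuous_const)
    exact IsClosed.preimage hcont (isClosed_coneOn u Finset.univ)
  have hTne : T.Nonempty := ⟨w ⬝ᵥ x0, (mem1 _).2 ⟨x0, hx0, hfeas, rfl⟩⟩
  have hTbdd : BddAbove T := ⟨M, fun t ht => by
    obtain ⟨x, h1, h2, rfl⟩ := (mem1 t).1 ht; exact hbdd x h1 h2⟩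
  set v := sSup T with hv
  have hvT : v ∈ T := hTclosed.csSup_mem hTne hTbdd
  obtain ⟨xs, hxs0, hxsf, hxsval⟩ := (mem1 v).1 hvT
  have hvmax : ∀ x : Fin n → ℝ, 0 ≤ x → A *ᵥ x ≤ b → w ⬝ᵥ x ≤ v := fun x h1 h2 =>
    le_csSup hTbdd ((mem1 _).2 ⟨x, h1, h2, rfl⟩)
  -- recession directions have nonpositive value
  have hrec : ∀ e : Fin n → ℝ, 0 ≤ e → A *ᵥ e ≤ 0 → w ⬝ᵥ e ≤ 0 := by
    intro e he hAe
    by_contra hwe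
    push_neg at hwe
    set τ := (M + 1 - w ⬝ᵥ xs) / (w ⬝ᵥ e) with hτ
    have hM : w ⬝ᵥ xs ≤ M := hbdd xs hxs0 hxsf
    have hτ0 : 0 ≤ τ := div_nonneg (by linarith) hwe.le
    have hx' : 0 ≤ xs + τ • e := fun j => by
      have := mul_nonneg hτ0 (he j)
      have := hxs0 j
      simp only [Pi.add_apply, Pi.smul_apply, smul_eq_mul]
      linarith
    have hAx' : A *ᵥ (xs + τ • e) ≤ b := by
      intro k
      rw [mulVec_add, mulVec_smul]
      have h1 : τ * (A *ᵥ e) k ≤ 0 := mul_nonpos_of_nonneg_of_nonpos hτ0 (hAe k)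
      have h2 := hxsf k
      simp only [Pi.add_apply, Pi.smul_apply, smul_eq_mul]
      linarith
    have hle := hbdd _ hx' hAx'
    rw [dotProduct_add, dotProduct_smul, smul_eq_mul, hτ,
      div_mul_cancel₀ _ hwe.ne'] at hle
    linarith
  -- dual feasibility with value v, via Farkas
  set u' : (Fin m ⊕ Fin n) → EuclideanSpace ℝ (Fin n ⊕ Unit) :=
    Sum.elim (fun k => mkE (fun j => A k j) (b k))
      (fun j => mkE (fun j' => -(if j' = j then 1 else 0)) 0) with hu'
  have hmem2 : ∃ c : (Fin m ⊕ Fin n) → ℝ, (∀ i, 0 ≤ c i) ∧ ∑ i, c i • u' i = mkE w v := by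
    apply farkas_cone
    intro y hy
    have hyeq : y = mkE (fun j => y (Sum.inl j)) (y (Sum.inr ())) := by
      ext q
      rcases q with j | q
      · rfl
      · cases q; rfl
    set d : Fin n → ℝ := fun j => -(y (Sum.inl j)) with hd
    set β : ℝ := y (Sum.inr ()) with hβ
    have hdnn : 0 ≤ d := by
      intro j
      have := hy (Sum.inr j)
      rw [hyeq, hu'] at this
      simp only [Sum.elim_inr, inner_mkE] at this
      simp only [dotProduct, neg_mul, ite_mul, one_mul, zero_mul] at this
      simp only [Finset.sum_neg_distrib, Finset.sum_ite_eq', Finset.mem_univ, if_true,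
        zero_mul, add_zero] at this
      simpa [hd] using this
    have hAd : ∀ k, (A *ᵥ d) k ≤ β * b k := by
      intro k
      have := hy (Sum.inl k)
      rw [hyeq, hu'] at this
      simp only [Sum.elim_inl, inner_mkE] at this
      have hdot : (fun j => A k j) ⬝ᵥ (fun j => y (Sum.inl j)) = -((A *ᵥ d) k) := by
        simp [dotProduct, mulVec, hd, Finset.sum_neg_distrib, mul_neg]
      rw [hdot] at this
      rw [mul_comm] at this ⊢
      linarith
    -- goal : 0 ≤ ⟪y, mkE w v⟫
    have hgoal : (inner ℝ y (mkE w v) : ℝ) = -(w ⬝ᵥ d) + β * v := by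
      rw [hyeq, inner_mkE]
      congr 1
      simp [dotProduct, hd, Finset.sum_neg_distrib, mul_neg, mul_comm]
    rw [hgoal]
    by_contra hcon
    push_neg at hcon
    have hwd : β * v < w ⬝ᵥ d := by linarith
    rcases le_or_gt β 0 with hβ0 | hβ0
    · -- recession direction d + (-β) • xs
      have he0 : 0 ≤ d + (-β) • xs := fun j => by
        have := mul_nonneg (neg_nonneg.2 hβ0) (hxs0 j)
        have := hdnn j
        simp only [Pi.add_apply, Pi.smul_apply, smul_eq_mul]
        linarith
      have heA : A *ᵥ (d + (-β) • xs) ≤ 0 := by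
        intro k
        rw [mulVec_add, mulVec_smul]
        have h1 := hAd k
        have h2 : (-β) * (A *ᵥ xs) k ≤ (-β) * b k :=
          mul_le_mul_of_nonneg_left (hxsf k) (neg_nonneg.2 hβ0)
        simp only [Pi.add_apply, Pi.smul_apply, smul_eq_mul, Pi.zero_apply]
        linarith
      have := hrec _ he0 heA
      rw [dotProduct_add, dotProduct_smul, smul_eq_mul, hxsval] at this
      nlinarith
    · -- β > 0 : the point β⁻¹ • d beats the optimum
      have hx' : (0:Fin n → ℝ) ≤ β⁻¹ • d := fun j => by
        have := mul_nonneg (inv_nonneg.2 hβ0.le) (hdnn j)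
        simpa using this
      have hAx' : A *ᵥ (β⁻¹ • d) ≤ b := by
        intro k
        rw [mulVec_smul]
        have := hAd k
        have h2 : β⁻¹ * (A *ᵥ d) k ≤ β⁻¹ * (β * b k) :=
          mul_le_mul_of_nonneg_left this (inv_nonneg.2 hβ0.le)
        rw [← mul_assoc, inv_mul_cancel₀ hβ0.ne', one_mul] at h2
        simpa using h2
      have := hvmax _ hx' hAx'
      rw [dotProduct_smul, smul_eq_mul] at this
      have : w ⬝ᵥ d ≤ β * v := by
        have h3 := mul_le_mul_of_nonneg_left this hβ0.le
        rw [← mul_assoc, mul_inv_cancel₀ hβ0.ne', one_mul] at h3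
        linarith
      linarith
  obtain ⟨c, hc, hsum⟩ := hmem2
  set π : Fin m → ℝ := fun k => c (Sum.inl k) with hπ
  set σ : Fin n → ℝ := fun j => c (Sum.inr j) with hσ
  have happ : ∀ q, (∑ i, c i • u' i) q = mkE w v q := fun q => congrArg (fun z => z q) hsum
  have hdual : ∀ j, w j + σ j = (Aᵀ *ᵥ π) j := by
    intro j
    have := happ (Sum.inl j)
    rw [WithLp.ofLp_sum, Finset.sum_apply] at this
    have hL : (∑ i, (c i • u' i) (Sum.inl j)) = (Aᵀ *ᵥ π) j - σ j := by
      rw [Fintype.sum_sum_type]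
      congr 1
      · simp [hu', mkE, mulVec, dotProduct, transpose_apply, mul_comm, hπ]
      · simp only [hu', Sum.elim_inr]
        simp [mkE, mul_ite, mul_neg, Finset.sum_ite_eq', hσ]
    rw [hL] at this
    have hR : mkE w v (Sum.inl j) = w j := rfl
    rw [hR] at this
    linarith
  have hval : b ⬝ᵥ π = v := by
    have := happ (Sum.inr ())
    rw [WithLp.ofLp_sum, Finset.sum_apply] at this
    have hL : (∑ i, (c i • u' i) (Sum.inr ())) = b ⬝ᵥ π := by
      rw [Fintype.sum_sum_type]
      have h1 : ∑ k, (c (Sum.inl k) • u' (Sum.inl k)) (Sum.inr ()) = b ⬝ᵥ π := by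
        simp [hu', mkE, dotProduct, hπ, mul_comm]
      have h2 : ∑ jj, (c (Sum.inr jj) • u' (Sum.inr jj)) (Sum.inr ()) = 0 := by
        simp [hu', mkE]
      rw [h1, h2, add_zero]
    rw [hL] at this
    exact this
  refine ⟨xs, π, hxs0, fun k => hc _, hxsf, ?_, ?_⟩
  · intro j
    have := hdual j
    have hσj : 0 ≤ σ j := hc _
    linarith
  · rw [hval, hxsval]

end LP

section Main

open Matrix

lemma dot_le_dot {n : ℕ} {u u' x : Fin n → ℝ} (hx : 0 ≤ x) (h : u ≤ u') :
    u ⬝ᵥ x ≤ u' ⬝ᵥ x :=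
  Finset.sum_le_sum fun i _ => mul_le_mul_of_nonneg_right (h i) (hx i)

lemma dot_le_dot' {n : ℕ} {π x x' : Fin n → ℝ} (hπ : 0 ≤ π) (h : x ≤ x') :
    π ⬝ᵥ x ≤ π ⬝ᵥ x' :=
  Finset.sum_le_sum fun i _ => mul_le_mul_of_nonneg_left (h i) (hπ i)

lemma dot_trans_eq {m n : ℕ} (A : Matrix (Fin m) (Fin n) ℝ) (π : Fin m → ℝ) (x : Fin n → ℝ) :
    (Aᵀ *ᵥ π) ⬝ᵥ x = π ⬝ᵥ (A *ᵥ x) := by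
  rw [Matrix.dotProduct_mulVec, Matrix.mulVec_transpose]

theorem stmt_0'
    (mR mZ nR nZ nL : ℕ)
    (Q_R : Matrix (Fin nL) (Fin mR) ℝ) (Q_Z : Matrix (Fin nL) (Fin mZ) ℝ)
    (P_R : Matrix (Fin nL) (Fin nR) ℝ) (P_Z : Matrix (Fin nL) (Fin nZ) ℝ)
    (w_R : Fin nR → ℝ) (w_Z : Fin nZ → ℝ) (s : Fin nL → ℝ)
    (xu : Fin mR → ℝ) (yu : Fin mZ → ℤ)
    (xl0 : Fin nR → ℝ) (yl0 : Fin nZ → ℤ)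
    (hxu : 0 ≤ xu) (hyu : 0 ≤ yu) (hxl0 : 0 ≤ xl0) (hyl0 : 0 ≤ yl0) :
    (∀ (x : Fin nR → ℝ) (y : Fin nZ → ℤ), 0 ≤ x → 0 ≤ y →
        P_R *ᵥ x + P_Z *ᵥ (fun i => (y i : ℝ)) ≤
          s - Q_R *ᵥ xu - Q_Z *ᵥ (fun i => (yu i : ℝ)) →
        w_R ⬝ᵥ x + w_Z ⬝ᵥ (fun i => (y i : ℝ)) ≤
          w_R ⬝ᵥ xl0 + w_Z ⬝ᵥ (fun i => (yl0 i : ℝ)))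
    ↔
    (∀ y : Fin nZ → ℤ, 0 ≤ y →
        (∃ x : Fin nR → ℝ, 0 ≤ x ∧
          P_R *ᵥ x ≤ s - Q_R *ᵥ xu - Q_Z *ᵥ (fun i => (yu i : ℝ))
            - P_Z *ᵥ (fun i => (y i : ℝ))) →
        ∃ (x : Fin nR → ℝ) (π : Fin nL → ℝ), 0 ≤ x ∧ 0 ≤ π ∧
          P_R *ᵥ x ≤ s - Q_R *ᵥ xu - Q_Z *ᵥ (fun i => (yu i : ℝ))
            - P_Z *ᵥ (fun i => (y i : ℝ)) ∧
          w_R ≤ P_Rᵀ *ᵥ π ∧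
          (∀ i, x i * ((P_Rᵀ *ᵥ π) i - w_R i) = 0) ∧
          (∀ k, π k * ((s - Q_R *ᵥ xu - Q_Z *ᵥ (fun i => (yu i : ℝ))
            - P_Z *ᵥ (fun i => (y i : ℝ))) k - (P_R *ᵥ x) k) = 0) ∧
          w_R ⬝ᵥ x + w_Z ⬝ᵥ (fun i => (y i : ℝ)) ≤
            w_R ⬝ᵥ xl0 + w_Z ⬝ᵥ (fun i => (yl0 i : ℝ))) := by
  set V : ℝ := w_R ⬝ᵥ xl0 + w_Z ⬝ᵥ (fun i => (yl0 i : ℝ)) with hV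
  constructor
  · -- optimality → guarded KKT
    rintro hopt y hy ⟨x0, hx0, hx0f⟩
    set yR : Fin nZ → ℝ := fun i => (y i : ℝ) with hyR
    set b : Fin nL → ℝ :=
      s - Q_R *ᵥ xu - Q_Z *ᵥ (fun i => (yu i : ℝ)) - P_Z *ᵥ yR with hb
    have hrearr : ∀ x : Fin nR → ℝ, (P_R *ᵥ x ≤ b) ↔
        (P_R *ᵥ x + P_Z *ᵥ yR ≤ s - Q_R *ᵥ xu - Q_Z *ᵥ (fun i => (yu i : ℝ))) := by
      intro x
      constructor <;> intro h k <;> have := h k <;>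
        simp only [Pi.add_apply, Pi.sub_apply, hb] at * <;> linarith
    have hbdd : ∀ x : Fin nR → ℝ, 0 ≤ x → P_R *ᵥ x ≤ b →
        w_R ⬝ᵥ x ≤ V - w_Z ⬝ᵥ yR := by
      intro x h1 h2
      have := hopt x y h1 hy ((hrearr x).1 h2)
      rw [← hyR] at this
      linarith
    obtain ⟨x, π, h1, h2, h3, h4, h5⟩ :=
      lp_strong_duality P_R b w_R x0 hx0 hx0f (V - w_Z ⬝ᵥ yR) hbdd
    have e1 : w_R ⬝ᵥ x ≤ (P_Rᵀ *ᵥ π) ⬝ᵥ x := dot_le_dot h1 h4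
    have e2 : (P_Rᵀ *ᵥ π) ⬝ᵥ x = π ⬝ᵥ (P_R *ᵥ x) := dot_trans_eq _ _ _
    have e3 : π ⬝ᵥ (P_R *ᵥ x) ≤ π ⬝ᵥ b := dot_le_dot' h2 h3
    have e4 : π ⬝ᵥ b = b ⬝ᵥ π := dotProduct_comm _ _
    -- all inequalities are equalities
    have he1 : (P_Rᵀ *ᵥ π) ⬝ᵥ x = w_R ⬝ᵥ x := by linarith
    have he2 : π ⬝ᵥ b = π ⬝ᵥ (P_R *ᵥ x) := by linarith
    have cs1 : ∀ i, x i * ((P_Rᵀ *ᵥ π) i - w_R i) = 0 := by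
      have hsum : ∑ i, x i * ((P_Rᵀ *ᵥ π) i - w_R i) = 0 := by
        have : ∑ i, x i * ((P_Rᵀ *ᵥ π) i - w_R i)
            = (P_Rᵀ *ᵥ π) ⬝ᵥ x - w_R ⬝ᵥ x := by
          simp [dotProduct, mul_sub, Finset.sum_sub_distrib, mul_comm]
        rw [this, he1, sub_self]
      intro i
      have := (Finset.sum_eq_zero_iff_of_nonneg (fun i _ =>
        mul_nonneg (h1 i) (sub_nonneg.2 (h4 i)))).1 hsum i (Finset.mem_univ i)
      exact this
    have cs2 : ∀ k, π k * (b k - (P_R *ᵥ x) k) = 0 := by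
      have hsum : ∑ k, π k * (b k - (P_R *ᵥ x) k) = 0 := by
        have : ∑ k, π k * (b k - (P_R *ᵥ x) k)
            = π ⬝ᵥ b - π ⬝ᵥ (P_R *ᵥ x) := by
          simp [dotProduct, mul_sub, Finset.sum_sub_distrib]
        rw [this, he2, sub_self]
      intro k
      exact (Finset.sum_eq_zero_iff_of_nonneg (fun k _ =>
        mul_nonneg (h2 k) (sub_nonneg.2 (h3 k)))).1 hsum k (Finset.mem_univ k)
    have hfin : w_R ⬝ᵥ x + w_Z ⬝ᵥ yR ≤ V := by
      have := hopt x y h1 hy ((hrearr x).1 h3)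
      rw [← hyR] at this
      exact this
    exact ⟨x, π, h1, h2, h3, h4, cs1, cs2, hfin⟩
  · -- guarded KKT → optimality
    intro hkkt x y hx hy hfeas
    set yR : Fin nZ → ℝ := fun i => (y i : ℝ) with hyR
    set b : Fin nL → ℝ :=
      s - Q_R *ᵥ xu - Q_Z *ᵥ (fun i => (yu i : ℝ)) - P_Z *ᵥ yR with hb
    have hxb : P_R *ᵥ x ≤ b := by
      intro k
      have := hfeas k
      simp only [Pi.add_apply, Pi.sub_apply, hb] at *
      linarith
    obtain ⟨x', π, h1, h2, h3, h4, cs1, cs2, hfin⟩ := hkkt y hy ⟨x, hx, hxb⟩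
    have e1 : w_R ⬝ᵥ x ≤ (P_Rᵀ *ᵥ π) ⬝ᵥ x := dot_le_dot hx h4
    have e2 : (P_Rᵀ *ᵥ π) ⬝ᵥ x = π ⬝ᵥ (P_R *ᵥ x) := dot_trans_eq _ _ _
    have e3 : π ⬝ᵥ (P_R *ᵥ x) ≤ π ⬝ᵥ b := dot_le_dot' h2 hxb
    have e4 : π ⬝ᵥ b = π ⬝ᵥ (P_R *ᵥ x') := by
      have hsum : ∑ k, π k * (b k - (P_R *ᵥ x') k) = 0 :=
        Finset.sum_eq_zero fun k _ => cs2 k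
      have : ∑ k, π k * (b k - (P_R *ᵥ x') k)
          = π ⬝ᵥ b - π ⬝ᵥ (P_R *ᵥ x') := by
        simp [dotProduct, mul_sub, Finset.sum_sub_distrib]
      rw [this] at hsum
      linarith
    have e5 : π ⬝ᵥ (P_R *ᵥ x') = w_R ⬝ᵥ x' := by
      have hsum : ∑ i, x' i * ((P_Rᵀ *ᵥ π) i - w_R i) = 0 :=
        Finset.sum_eq_zero fun i _ => cs1 i
      have : ∑ i, x' i * ((P_Rᵀ *ᵥ π) i - w_R i)
          = (P_Rᵀ *ᵥ π) ⬝ᵥ x' - w_R ⬝ᵥ x' := by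
        simp [dotProduct, mul_sub, Finset.sum_sub_distrib, mul_comm]
      rw [this] at hsum
      have := dot_trans_eq P_R π x'
      linarith
    have hxx' : w_R ⬝ᵥ x ≤ w_R ⬝ᵥ x' := by linarith
    calc w_R ⬝ᵥ x + w_Z ⬝ᵥ yR ≤ w_R ⬝ᵥ x' + w_Z ⬝ᵥ yR := by linarith
    _ ≤ V := hfin

end Main

/-- equivalence between lower-level optimality of `(xl0, yl0)`
(value dominance over the whole lower-level feasible region) and the
projection-guarded KKT formulation. -/
theorem stmt_0
    (mR mZ nR nZ nL : ℕ)
    (Q_R : Matrix (Fin nL) (Fin mR) ℝ) (Q_Z : Matrix (Fin nL) (Fin mZ) ℝ)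
    (P_R : Matrix (Fin nL) (Fin nR) ℝ) (P_Z : Matrix (Fin nL) (Fin nZ) ℝ)
    (w_R : Fin nR → ℝ) (w_Z : Fin nZ → ℝ) (s : Fin nL → ℝ)
    (xu : Fin mR → ℝ) (yu : Fin mZ → ℤ)
    (xl0 : Fin nR → ℝ) (yl0 : Fin nZ → ℤ)
    (hxu : 0 ≤ xu) (hyu : 0 ≤ yu) (hxl0 : 0 ≤ xl0) (hyl0 : 0 ≤ yl0) :
    (∀ (x : Fin nR → ℝ) (y : Fin nZ → ℤ), 0 ≤ x → 0 ≤ y →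
        P_R *ᵥ x + P_Z *ᵥ (fun i => (y i : ℝ)) ≤
          s - Q_R *ᵥ xu - Q_Z *ᵥ (fun i => (yu i : ℝ)) →
        w_R ⬝ᵥ x + w_Z ⬝ᵥ (fun i => (y i : ℝ)) ≤
          w_R ⬝ᵥ xl0 + w_Z ⬝ᵥ (fun i => (yl0 i : ℝ)))
    ↔
    (∀ y : Fin nZ → ℤ, 0 ≤ y →
        (∃ x : Fin nR → ℝ, 0 ≤ x ∧
          P_R *ᵥ x ≤ s - Q_R *ᵥ xu - Q_Z *ᵥ (fun i => (yu i : ℝ))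
            - P_Z *ᵥ (fun i => (y i : ℝ))) →
        ∃ (x : Fin nR → ℝ) (π : Fin nL → ℝ), 0 ≤ x ∧ 0 ≤ π ∧
          P_R *ᵥ x ≤ s - Q_R *ᵥ xu - Q_Z *ᵥ (fun i => (yu i : ℝ))
            - P_Z *ᵥ (fun i => (y i : ℝ)) ∧
          w_R ≤ P_Rᵀ *ᵥ π ∧
          (∀ i, x i * ((P_Rᵀ *ᵥ π) i - w_R i) = 0) ∧
          (∀ k, π k * ((s - Q_R *ᵥ xu - Q_Z *ᵥ (fun i => (yu i : ℝ))
            - P_Z *ᵥ (fun i => (y i : ℝ))) k - (P_R *ᵥ x) k) = 0) ∧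
          w_R ⬝ᵥ x + w_Z ⬝ᵥ (fun i => (y i : ℝ)) ≤
            w_R ⬝ᵥ xl0 + w_Z ⬝ᵥ (fun i => (yl0 i : ℝ))) := by
    exact stmt_0' mR mZ nR nZ nL Q_R Q_Z P_R P_Z w_R w_Z s xu yu xl0 yl0 hxu hyu hxl0 hyl0
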